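/- arXiv:2206.14897 — 2 statements merged into one kernel-verified Lean document; each statement's English description precedes it below -/
import Mathlib

section
/- Let G be a connected finite simple graph on vertex set V = Fin M, and let c : V → V → ℝ be a symmetric weight function with c i j > 0 whenever i and j are adjacent. For any antisymmetric vector field u : V → V → ℝ supported on edges of G (i.e., u i j = -u j i and u i j = 0 unless i and j are adjacent), there exists a potential function Φ : V → ℝ such that the potential field ∇Φ (defined by (∇Φ) i j = (Φ i - Φ j) if i and j are adjacent and 0 otherwise) satisfies div_c(∇Φ) = div_c(u), and moreover ⟨∇Φ, ∇Φ⟩_c ≤ ⟨v, v⟩_c for every antisymmetric vector field v supported on edges of G with div_c(v) = div_c(u). That is, the minimizer of the energy ⟨v,v⟩_c over vector fields with prescribed divergence is attained by a potential field. -/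
/-- The potential field (gradient) of a potential function `Φ` on a graph `G`. -/
noncomputable def gradF {M : ℕ} (G : SimpleGraph (Fin M)) [DecidableRel G.Adj] (Φ : Fin M → ℝ) :
    Fin M → Fin M → ℝ :=
  fun i j => if G.Adj i j then Φ i - Φ j else 0

/-- The divergence of a vector field `v` with respect to the weights `c`. -/
noncomputable def divC {M : ℕ} (G : SimpleGraph (Fin M)) [DecidableRel G.Adj]
    (c : Fin M → Fin M → ℝ) (v : Fin M → Fin M → ℝ) : Fin M → ℝ :=
  fun i => ∑ j, if G.Adj i j then c i j * v i j else 0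

/-- The inner product of two vector fields with respect to the weights `c`. -/
noncomputable def innerC {M : ℕ} (G : SimpleGraph (Fin M)) [DecidableRel G.Adj]
    (c : Fin M → Fin M → ℝ) (u v : Fin M → Fin M → ℝ) : ℝ :=
  (1 / 2) * ∑ i, ∑ j, if G.Adj i j then c i j * u i j * v i j else 0

/-- Integration by parts: `∑ Ψ i * div v i = ⟨∇Ψ, v⟩`. -/
lemma sum_mul_divC {M : ℕ} (G : SimpleGraph (Fin M)) [DecidableRel G.Adj]
    (c : Fin M → Fin M → ℝ) (hsym : ∀ i j, c i j = c j i)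
    (Ψ : Fin M → ℝ) (v : Fin M → Fin M → ℝ) (hanti : ∀ i j, v i j = -v j i) :
    ∑ i, Ψ i * divC G c v i = innerC G c (gradF G Ψ) v := by
  classical
  have hT2 : (∑ i, ∑ j, if G.Adj i j then Ψ j * (c i j * v i j) else 0)
      = -∑ i, ∑ j, if G.Adj i j then Ψ i * (c i j * v i j) else 0 := by
    rw [Finset.sum_comm, ← Finset.sum_neg_distrib]
    refine Finset.sum_congr rfl fun i _ => ?_
    rw [← Finset.sum_neg_distrib]
    refine Finset.sum_congr rfl fun j _ => ?_
    by_cases h : G.Adj i j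
    · rw [if_pos h, if_pos (G.adj_symm h), hsym j i, hanti j i]
      ring
    · rw [if_neg h, if_neg (fun h' => h (G.adj_symm h')), neg_zero]
  have hL : ∑ i, Ψ i * divC G c v i
      = ∑ i, ∑ j, if G.Adj i j then Ψ i * (c i j * v i j) else 0 := by
    refine Finset.sum_congr rfl fun i _ => ?_
    rw [divC, Finset.mul_sum]
    refine Finset.sum_congr rfl fun j _ => ?_
    rw [mul_ite, mul_zero]
  have hR : innerC G c (gradF G Ψ) v
      = (1/2) * ((∑ i, ∑ j, if G.Adj i j then Ψ i * (c i j * v i j) else 0)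
        - (∑ i, ∑ j, if G.Adj i j then Ψ j * (c i j * v i j) else 0)) := by
    rw [innerC, ← Finset.sum_sub_distrib]
    congr 1
    refine Finset.sum_congr rfl fun i _ => ?_
    rw [← Finset.sum_sub_distrib]
    refine Finset.sum_congr rfl fun j _ => ?_
    by_cases h : G.Adj i j
    · rw [if_pos h, if_pos h, if_pos h, gradF, if_pos h]
      ring
    · simp [h]
  rw [hL, hR, hT2]
  ring

/-- Expansion of the quadratic form. -/
lemma innerC_expand {M : ℕ} (G : SimpleGraph (Fin M)) [DecidableRel G.Adj]
    (c : Fin M → Fin M → ℝ) (g w : Fin M → Fin M → ℝ) :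
    innerC G c (fun i j => g i j + w i j) (fun i j => g i j + w i j)
      = innerC G c g g + 2 * innerC G c g w + innerC G c w w := by
  classical
  have key : ∀ i j : Fin M,
      (if G.Adj i j then c i j * (g i j + w i j) * (g i j + w i j) else 0)
      = (if G.Adj i j then c i j * g i j * g i j else 0)
        + 2 * (if G.Adj i j then c i j * g i j * w i j else 0)
        + (if G.Adj i j then c i j * w i j * w i j else 0) := by
    intro i j
    by_cases h : G.Adj i j
    · simp only [if_pos h]; ring
    · simp [h]
  simp only [innerC]
  rw [show (∑ i, ∑ j, if G.Adj i j then
      c i j * (g i j + w i j) * (g i j + w i j) else 0)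
    = (∑ i, ∑ j, if G.Adj i j then c i j * g i j * g i j else 0)
      + 2 * (∑ i, ∑ j, if G.Adj i j then c i j * g i j * w i j else 0)
      + (∑ i, ∑ j, if G.Adj i j then c i j * w i j * w i j else 0) by
    rw [Finset.mul_sum, ← Finset.sum_add_distrib, ← Finset.sum_add_distrib]
    refine Finset.sum_congr rfl fun i _ => ?_
    rw [Finset.mul_sum, ← Finset.sum_add_distrib, ← Finset.sum_add_distrib]
    exact Finset.sum_congr rfl fun j _ => key i j]
  ring

/-- Nonnegativity of the energy. -/
lemma innerC_self_nonneg {M : ℕ} (G : SimpleGraph (Fin M)) [DecidableRel G.Adj]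
    (c : Fin M → Fin M → ℝ) (hpos : ∀ i j, G.Adj i j → 0 < c i j)
    (w : Fin M → Fin M → ℝ) : 0 ≤ innerC G c w w := by
  apply mul_nonneg (by norm_num)
  refine Finset.sum_nonneg fun i _ => Finset.sum_nonneg fun j _ => ?_
  by_cases h : G.Adj i j
  · rw [if_pos h, mul_assoc]
    exact mul_nonneg (hpos i j h).le (mul_self_nonneg _)
  · rw [if_neg h]

/-- The minimizer of the energy `⟨v, v⟩_c` over antisymmetric vector fields supported on
edges with prescribed divergence `div_c(u)` is attained by a potential field `∇Φ`. -/
theorem minimizer_is_potential_field {M : ℕ} (G : SimpleGraph (Fin M))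
    [DecidableRel G.Adj] (hconn : G.Connected)
    (c : Fin M → Fin M → ℝ) (hsym : ∀ i j, c i j = c j i)
    (hpos : ∀ i j, G.Adj i j → 0 < c i j)
    (u : Fin M → Fin M → ℝ)
    (hanti : ∀ i j, u i j = -u j i)
    (hsupp : ∀ i j, ¬ G.Adj i j → u i j = 0) :
    ∃ Φ : Fin M → ℝ,
      divC G c (gradF G Φ) = divC G c u ∧
      ∀ v : Fin M → Fin M → ℝ,
        (∀ i j, v i j = -v j i) →
        (∀ i j, ¬ G.Adj i j → v i j = 0) →
        divC G c v = divC G c u →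
        innerC G c (gradF G Φ) (gradF G Φ) ≤ innerC G c v v := by
  classical
  have hM : 0 < M := by
    have : Nonempty (Fin M) := hconn.nonempty
    exact Fin.pos_iff_nonempty.mpr this
  have i0 : Fin M := ⟨0, hM⟩
  have hgrad_anti : ∀ Ψ : Fin M → ℝ, ∀ i j, gradF G Ψ i j = -gradF G Ψ j i := by
    intro Ψ i j
    by_cases h : G.Adj i j
    · rw [gradF, gradF, if_pos h, if_pos (G.adj_symm h)]; ring
    · rw [gradF, gradF, if_neg h, if_neg (fun h' => h (G.adj_symm h')), neg_zero]
  -- The Laplacian as a linear map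
  set L : (Fin M → ℝ) →ₗ[ℝ] (Fin M → ℝ) :=
    { toFun := fun Φ => divC G c (gradF G Φ)
      map_add' := by
        intro Φ Ψ
        funext i
        simp only [divC, Pi.add_apply, ← Finset.sum_add_distrib]
        refine Finset.sum_congr rfl fun j _ => ?_
        by_cases h : G.Adj i j
        · simp only [gradF, if_pos h, Pi.add_apply]; ring
        · simp [h]
      map_smul' := by
        intro r Φ
        funext i
        simp only [divC, Pi.smul_apply, RingHom.id_apply, smul_eq_mul, Finset.mul_sum]
        refine Finset.sum_congr rfl fun j _ => ?_
        by_cases h : G.Adj i j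
        · simp only [gradF, if_pos h, Pi.smul_apply, smul_eq_mul]; ring
        · simp [h] } with hLdef
  -- the sum functional
  set σ : (Fin M → ℝ) →ₗ[ℝ] ℝ :=
    { toFun := fun f => ∑ i, f i
      map_add' := by intro f g; simp [Finset.sum_add_distrib]
      map_smul' := by intro r f; simp [Finset.mul_sum] } with hσdef
  -- divergence of any antisymmetric field sums to zero
  have hsum_div : ∀ v : Fin M → Fin M → ℝ, (∀ i j, v i j = -v j i) →
      ∑ i, divC G c v i = 0 := by
    intro v hv
    have h1 : ∑ i, (fun _ : Fin M => (1:ℝ)) i * divC G c v i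
        = innerC G c (gradF G (fun _ => 1)) v :=
      sum_mul_divC G c hsym _ v hv
    have h2 : innerC G c (gradF G (fun _ => (1:ℝ))) v = 0 := by
      rw [innerC]
      have : ∀ i j : Fin M,
          (if G.Adj i j then c i j * gradF G (fun _ => (1:ℝ)) i j * v i j else 0) = 0 := by
        intro i j
        by_cases h : G.Adj i j
        · simp [gradF, h]
        · simp [h]
      simp [this]
    simpa [h2] using h1
  -- kernel of L consists of constants
  have hker : ∀ Φ : Fin M → ℝ, L Φ = 0 → ∀ i j, Φ i = Φ j := by
    intro Φ hΦ
    have h0 : innerC G c (gradF G Φ) (gradF G Φ) = 0 := by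
      have := sum_mul_divC G c hsym Φ (gradF G Φ) (hgrad_anti Φ)
      have hz : ∀ i, divC G c (gradF G Φ) i = 0 := by
        intro i; exact congrFun hΦ i
      rw [← this]
      simp [hz]
    have hterm : ∀ i j, G.Adj i j → Φ i = Φ j := by
      intro i j hij
      have hnn : ∀ i ∈ Finset.univ (α := Fin M), (0:ℝ) ≤
          ∑ j, if G.Adj i j then c i j * gradF G Φ i j * gradF G Φ i j else 0 := by
        intro i _
        refine Finset.sum_nonneg fun j _ => ?_
        by_cases h : G.Adj i j
        · simp only [if_pos h, gradF, mul_assoc]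
          exact mul_nonneg (hpos i j h).le (mul_self_nonneg _)
        · rw [if_neg h]
      have hsum0 : ∑ i, ∑ j, (if G.Adj i j then
          c i j * gradF G Φ i j * gradF G Φ i j else 0) = 0 := by
        rw [innerC] at h0
        linarith
      have h1 := (Finset.sum_eq_zero_iff_of_nonneg hnn).mp hsum0 i (Finset.mem_univ i)
      have hnn2 : ∀ j ∈ Finset.univ (α := Fin M), (0:ℝ) ≤
          (if G.Adj i j then c i j * gradF G Φ i j * gradF G Φ i j else 0) := by
        intro j _
        by_cases h : G.Adj i j
        · simp only [if_pos h, gradF, mul_assoc]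
          exact mul_nonneg (hpos i j h).le (mul_self_nonneg _)
        · rw [if_neg h]
      have h2 := (Finset.sum_eq_zero_iff_of_nonneg hnn2).mp h1 j (Finset.mem_univ j)
      rw [if_pos hij, gradF, if_pos hij] at h2
      have hc := hpos i j hij
      have : (Φ i - Φ j) * (Φ i - Φ j) = 0 := by
        by_contra h
        have := mul_ne_zero (ne_of_gt hc) h
        rw [← mul_assoc] at this
        exact this h2
      have := mul_self_eq_zero.mp this
      linarith [sub_eq_zero.mp this]
    intro i j
    obtain ⟨w⟩ := hconn i j
    induction w with
    | nil => rfl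
    | cons h p ih => exact (hterm _ _ h).trans ih
  -- kernel of L is the span of the constant function 1
  have hker_eq : LinearMap.ker L = Submodule.span ℝ {(fun _ => 1 : Fin M → ℝ)} := by
    apply le_antisymm
    · intro Φ hΦ
      rw [LinearMap.mem_ker] at hΦ
      rw [Submodule.mem_span_singleton]
      refine ⟨Φ i0, ?_⟩
      funext x
      simp only [Pi.smul_apply, smul_eq_mul, mul_one]
      exact (hker Φ hΦ x i0).symm
    · rw [Submodule.span_le, Set.singleton_subset_iff]
      simp only [SetLike.mem_coe, LinearMap.mem_ker]
      funext i
      simp only [hLdef, LinearMap.coe_mk, AddHom.coe_mk, divC]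
      refine Finset.sum_eq_zero fun j _ => ?_
      by_cases h : G.Adj i j
      · simp [gradF, h]
      · simp [h]
  have hone_ne : (fun _ => 1 : Fin M → ℝ) ≠ 0 := by
    intro h
    have := congrFun h i0
    simp at this
  have hfinrank_ker : Module.finrank ℝ (LinearMap.ker L) = 1 := by
    rw [hker_eq]
    exact finrank_span_singleton hone_ne
  -- range of L is contained in ker σ
  have hrange_le : LinearMap.range L ≤ LinearMap.ker σ := by
    rintro f ⟨Φ, rfl⟩
    rw [LinearMap.mem_ker]
    simp only [hσdef, hLdef, LinearMap.coe_mk, AddHom.coe_mk]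
    exact hsum_div (gradF G Φ) (hgrad_anti Φ)
  -- σ is surjective
  have hσ_surj : Function.Surjective σ := by
    intro r
    refine ⟨Pi.single i0 r, ?_⟩
    simp [hσdef, Pi.single_apply]
  have hfinrank_kerσ : Module.finrank ℝ (LinearMap.ker σ) = M - 1 := by
    have h1 := LinearMap.finrank_range_add_finrank_ker σ
    have h2 : LinearMap.range σ = ⊤ := LinearMap.range_eq_top.mpr hσ_surj
    rw [h2] at h1
    have h3 : Module.finrank ℝ (⊤ : Submodule ℝ ℝ) = 1 := by
      rw [finrank_top]; exact Module.finrank_self ℝ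
    rw [h3] at h1
    have h4 : Module.finrank ℝ (Fin M → ℝ) = M := by
      simp [Module.finrank_pi]
    rw [h4] at h1
    omega
  have hfinrank_range : Module.finrank ℝ (LinearMap.range L) = M - 1 := by
    have h1 := LinearMap.finrank_range_add_finrank_ker L
    rw [hfinrank_ker] at h1
    have h4 : Module.finrank ℝ (Fin M → ℝ) = M := by
      simp [Module.finrank_pi]
    rw [h4] at h1
    omega
  have hrange_eq : LinearMap.range L = LinearMap.ker σ := by
    apply Submodule.eq_of_le_of_finrank_eq hrange_le
    rw [hfinrank_range, hfinrank_kerσ]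
  -- div u is in ker σ, hence in range L
  have hdivu_mem : divC G c u ∈ LinearMap.ker σ := by
    rw [LinearMap.mem_ker]
    simp only [hσdef, LinearMap.coe_mk, AddHom.coe_mk]
    exact hsum_div u hanti
  rw [← hrange_eq] at hdivu_mem
  obtain ⟨Φ, hΦ⟩ := hdivu_mem
  refine ⟨Φ, hΦ, ?_⟩
  intro v hvanti hvsupp hvdiv
  -- decompose v = ∇Φ + w
  set g : Fin M → Fin M → ℝ := gradF G Φ with hg
  set w : Fin M → Fin M → ℝ := fun i j => v i j - g i j with hw
  have hwanti : ∀ i j, w i j = -w j i := by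
    intro i j
    simp only [hw, hvanti i j, hg, hgrad_anti Φ i j]
    ring
  have hdivw : ∀ i, divC G c w i = 0 := by
    intro i
    have : divC G c w i = divC G c v i - divC G c g i := by
      simp only [divC, hw, ← Finset.sum_sub_distrib]
      refine Finset.sum_congr rfl fun j _ => ?_
      by_cases h : G.Adj i j
      · simp only [if_pos h]; ring
      · simp [h]
    rw [this, hvdiv]
    have : divC G c g = divC G c u := hΦ
    rw [this]
    ring
  have horth : innerC G c g w = 0 := by
    have h1 := sum_mul_divC G c hsym Φ w hwanti
    have : ∑ i, Φ i * divC G c w i = 0 := by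
      simp [hdivw]
    rw [this] at h1
    exact h1.symm
  have hv_eq : v = fun i j => g i j + w i j := by
    funext i j
    simp [hw]
  calc innerC G c g g
      = innerC G c g g + 2 * innerC G c g w + innerC G c w w - innerC G c w w := by
        rw [horth]; ring
    _ ≤ innerC G c g g + 2 * innerC G c g w + innerC G c w w := by
        have := innerC_self_nonneg G c hpos w
        linarith
    _ = innerC G c v v := by
        rw [hv_eq, innerC_expand]
end

section
/- Let G be a connected finite simple graph on vertex set V = Fin M, and let c : V → V → ℝ be a symmetric weight function with c i j > 0 whenever i and j are adjacent. If Φ : V → ℝ satisfies ∑_{(i,j) : i adjacent to j} c i j * (Φ i - Φ j)² = 0, then Φ is constant on V, and hence div_c(∇Φ) = 0. Consequently, the induced bilinear form ⟨σ, σ⟩_ρ = ∑_i σ i * Φ^{σ} i on the tangent space T = {σ : V → ℝ | ∑_i σ i = 0} is positive definite: ⟨σ, σ⟩_ρ = 0 implies σ = 0. -/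
lemma energy_eq_twice {M : ℕ} (G : SimpleGraph (Fin M)) [DecidableRel G.Adj]
    (c : Fin M → Fin M → ℝ) (hsym : ∀ i j, c i j = c j i) (Φ : Fin M → ℝ) :
    (∑ i, ∑ j, if G.Adj i j then c i j * (Φ i - Φ j) ^ 2 else 0)
      = 2 * ∑ i, Φ i * divC G c (gradF G Φ) i := by
  have key : ∀ i j, (if G.Adj i j then c i j * (Φ i - Φ j) ^ 2 else 0)
      = (if G.Adj i j then Φ i * (c i j * (Φ i - Φ j)) else 0)
        + (if G.Adj i j then Φ j * (c i j * (Φ j - Φ i)) else 0) := by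
    intro i j; by_cases h : G.Adj i j <;> simp [h]; ring
  have swap : (∑ i, ∑ j, if G.Adj i j then Φ j * (c i j * (Φ j - Φ i)) else 0)
      = ∑ i, ∑ j, if G.Adj i j then Φ i * (c i j * (Φ i - Φ j)) else 0 := by
    rw [Finset.sum_comm]
    refine Finset.sum_congr rfl fun i _ => Finset.sum_congr rfl fun j _ => ?_
    by_cases h : G.Adj i j
    · simp [h, h.symm, hsym i j]
    · rw [if_neg (fun h' => h (G.adj_symm h')), if_neg h]
  calc (∑ i, ∑ j, if G.Adj i j then c i j * (Φ i - Φ j) ^ 2 else 0)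
      = (∑ i, ∑ j, if G.Adj i j then Φ i * (c i j * (Φ i - Φ j)) else 0)
        + ∑ i, ∑ j, if G.Adj i j then Φ j * (c i j * (Φ j - Φ i)) else 0 := by
        simp_rw [key, Finset.sum_add_distrib]
    _ = 2 * ∑ i, ∑ j, if G.Adj i j then Φ i * (c i j * (Φ i - Φ j)) else 0 := by
        rw [swap]; ring
    _ = 2 * ∑ i, Φ i * divC G c (gradF G Φ) i := by
        congr 1
        refine Finset.sum_congr rfl fun i _ => ?_
        rw [divC, Finset.mul_sum]
        refine Finset.sum_congr rfl fun j _ => ?_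
        by_cases h : G.Adj i j <;> simp [h, gradF]

lemma energy_zero_const {M : ℕ} (G : SimpleGraph (Fin M)) [DecidableRel G.Adj]
    (hconn : G.Connected) (c : Fin M → Fin M → ℝ)
    (hpos : ∀ i j, G.Adj i j → 0 < c i j) (Φ : Fin M → ℝ)
    (h : (∑ i, ∑ j, if G.Adj i j then c i j * (Φ i - Φ j) ^ 2 else 0) = 0) :
    ∀ i j, Φ i = Φ j := by
  have hnn : ∀ i j : Fin M, 0 ≤ (if G.Adj i j then c i j * (Φ i - Φ j) ^ 2 else 0) := by
    intro i j
    by_cases hij : G.Adj i j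
    · simp only [hij, if_true]
      exact mul_nonneg (hpos i j hij).le (sq_nonneg _)
    · simp [hij]
  have hterm : ∀ i j : Fin M, G.Adj i j → Φ i = Φ j := by
    intro i j hij
    have h1 : ∀ i ∈ (Finset.univ : Finset (Fin M)),
        (∑ j, if G.Adj i j then c i j * (Φ i - Φ j) ^ 2 else 0) = 0 :=
      (Finset.sum_eq_zero_iff_of_nonneg (fun i _ =>
        Finset.sum_nonneg fun j _ => hnn i j)).mp h
    have h2 : (if G.Adj i j then c i j * (Φ i - Φ j) ^ 2 else 0) = 0 :=
      (Finset.sum_eq_zero_iff_of_nonneg (fun j _ => hnn i j)).mp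
        (h1 i (Finset.mem_univ i)) j (Finset.mem_univ j)
    simp only [hij, if_true] at h2
    have := (mul_eq_zero.mp h2).resolve_left (hpos i j hij).ne'
    have := sub_eq_zero.mp (pow_eq_zero_iff (by norm_num) |>.mp this)
    linarith
  intro i j
  obtain ⟨w⟩ := hconn.preconnected i j
  induction w with
  | nil => rfl
  | cons h' _ ih => exact (hterm _ _ h').trans ih

/-- If the Dirichlet energy `∑_{(i,j) adjacent} c i j * (Φ i - Φ j)²` vanishes on a
connected graph with positive symmetric weights, then `Φ` is constant and
`div_c(∇Φ) = 0`. Consequently the induced bilinear form `⟨σ, σ⟩_ρ = ∑ i, σ i * Φ^σ i` on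
the tangent space is positive definite. -/
theorem energy_zero_positive_definite {M : ℕ} (G : SimpleGraph (Fin M))
    [DecidableRel G.Adj] (hconn : G.Connected)
    (c : Fin M → Fin M → ℝ) (hsym : ∀ i j, c i j = c j i)
    (hpos : ∀ i j, G.Adj i j → 0 < c i j) :
    (∀ Φ : Fin M → ℝ,
      (∑ i, ∑ j, if G.Adj i j then c i j * (Φ i - Φ j) ^ 2 else 0) = 0 →
      (∀ i j, Φ i = Φ j) ∧ divC G c (gradF G Φ) = 0) ∧
    (∀ σ Φσ : Fin M → ℝ, (∑ i, σ i = 0) → divC G c (gradF G Φσ) = σ →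
      ∑ i, σ i * Φσ i = 0 → σ = 0) := by
  have main : ∀ Φ : Fin M → ℝ,
      (∑ i, ∑ j, if G.Adj i j then c i j * (Φ i - Φ j) ^ 2 else 0) = 0 →
      (∀ i j, Φ i = Φ j) ∧ divC G c (gradF G Φ) = 0 := by
    intro Φ h
    have hc := energy_zero_const G hconn c hpos Φ h
    refine ⟨hc, ?_⟩
    funext i
    simp only [divC, gradF]
    refine Finset.sum_eq_zero fun j _ => ?_
    by_cases hij : G.Adj i j <;> simp [hij, hc i j]
  refine ⟨main, ?_⟩
  intro σ Φσ _ hdiv hzero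
  have he : (∑ i, ∑ j, if G.Adj i j then c i j * (Φσ i - Φσ j) ^ 2 else 0) = 0 := by
    rw [energy_eq_twice G c hsym Φσ, hdiv]
    simp_rw [mul_comm (σ _) (Φσ _)] at hzero
    rw [hzero]; ring
  rw [← hdiv, (main Φσ he).2]
end
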